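/- Let p be a prime, K a field satisfying: char(K) ≠ p, K contains a primitive p-th root of unity ζ_p, and x^p = ζ_p^q has no solution in K for p ∤ q. Let φ be a permutation of a finite set Y such that φ^p = id and φ has no fixed points (so all orbits have size exactly p). Let V be the free K-vector space on Y with induced operator A. If there exists a linear map B : V → V with B^p = A, then p divides the number of orbits of φ on Y. -/

import Mathlib

/-- Let `p` be prime and `K` a field with `char K ≠ p`, containing a
primitive `p`-th root of unity `ζ`, such that `x ^ p = ζ ^ q` has no solution in `K`
for `p ∤ q`. Let `φ` be a fixed-point free permutation of a finite set `Y` with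
`φ ^ p = 1`, let `A` be the induced operator on the free `K`-vector space on `Y`
(modelled as `Y → K`), and suppose `B ^ p = A` for some linear `B`. Then `p` divides
the number of orbits of `φ` on `Y`. -/
theorem p_dvd_orbits_of_root_of_induced_operator
    (p : ℕ) (hp : p.Prime) (K : Type*) [Field K] (hchar : ringChar K ≠ p)
    (ζ : K) (hζ : IsPrimitiveRoot ζ p)
    (hK : ∀ q : ℤ, ¬ (p : ℤ) ∣ q → ¬ ∃ x : K, x ^ p = ζ ^ q)
    (Y : Type*) [Fintype Y]
    (φ : Equiv.Perm Y) (hφp : φ ^ p = 1) (hfix : ∀ y : Y, φ y ≠ y)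
    (A B : Module.End K (Y → K))
    (hA : ∀ (f : Y → K) (y : Y), A f (φ y) = f y)
    (hB : B ^ p = A) :
    p ∣ Nat.card (Quotient (MulAction.orbitRel (Subgroup.zpowers φ) Y)) := by
  classical
  have hζ0 : ζ ≠ 0 := hζ.ne_zero hp.ne_zero
  have hζp : ζ ^ p = 1 := hζ.pow_eq_one
  set s := MulAction.orbitRel (Subgroup.zpowers φ) Y with hs
  set Q := Quotient s with hQ
  -- pointwise fixed points are preserved by powers
  have fact1 : ∀ (σ : Equiv.Perm Y) (y : Y), σ y = y → ∀ k : ℕ, (σ ^ k) y = y := by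
    intro σ y h k
    induction k with
    | zero => simp
    | succ n ih => rw [pow_succ, Equiv.Perm.mul_apply, h, ih]
  -- gcd closure of pointwise periods
  have gcdfix : ∀ (y : Y) (a b : ℕ),
      (φ ^ a) y = y → (φ ^ b) y = y → (φ ^ Nat.gcd a b) y = y := by
    intro y a b
    induction a, b using Nat.gcd.induction with
    | H0 n => intro _ h2; simpa using h2
    | H1 m n hm ih =>
      intro h1 h2
      have h3 : (φ ^ (n % m)) y = y := by
        have h4 : ((φ ^ m) ^ (n / m)) y = y := fact1 _ _ h1 _
        calc (φ ^ (n % m)) y = (φ ^ (n % m)) (((φ ^ m) ^ (n / m)) y) := by rw [h4]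
          _ = (φ ^ (n % m + m * (n / m))) y := by
              rw [pow_add, pow_mul, Equiv.Perm.mul_apply]
          _ = (φ ^ n) y := by rw [Nat.mod_add_div]
          _ = y := h2
      rw [Nat.gcd_rec]
      exact ih h3 h1
  -- pointwise periods are divisible by p
  have fact2 : ∀ (y : Y) (m : ℕ), (φ ^ m) y = y → p ∣ m := by
    intro y m hm
    by_contra hpm
    have hcop : Nat.Coprime p m := (Nat.Prime.coprime_iff_not_dvd hp).mpr hpm
    have h1 : (φ ^ p) y = y := by rw [hφp]; rfl
    have h2 := gcdfix y p m h1 hm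
    rw [Nat.Coprime] at hcop
    rw [hcop, pow_one] at h2
    exact hfix y h2
  -- ζ powers of p-divisible exponents are 1
  have zeta1 : ∀ m : ℕ, p ∣ m → ζ ^ m = 1 := by
    rintro m ⟨t, rfl⟩
    rw [pow_mul, hζp, one_pow]
  -- well-definedness of ζ-exponents along orbits
  have half : ∀ (r : Y) (j k : ℕ), k ≤ j → (φ ^ j) r = (φ ^ k) r → ζ ^ j = ζ ^ k := by
    intro r j k hkj h
    have e : j - k + k = j := Nat.sub_add_cancel hkj
    have h1 : (φ ^ (j - k)) ((φ ^ k) r) = (φ ^ k) r := by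
      rw [← Equiv.Perm.mul_apply, ← pow_add, e, h]
    have hd : p ∣ j - k := fact2 _ _ h1
    calc ζ ^ j = ζ ^ (j - k + k) := by rw [e]
      _ = ζ ^ (j - k) * ζ ^ k := pow_add ζ _ _
      _ = ζ ^ k := by rw [zeta1 _ hd, one_mul]
  have fact3 : ∀ (r : Y) (j k : ℕ), (φ ^ j) r = (φ ^ k) r → ζ ^ j = ζ ^ k := by
    intro r j k h
    rcases le_total k j with hkj | hjk
    · exact half r j k hkj h
    · exact (half r k j hjk h.symm).symm
  -- integer powers of φ reduce to natural powers
  have hzp : ∀ n : ℤ, φ ^ n = φ ^ ((n % (p : ℤ)).toNat) := by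
    intro n
    have hpz : (p : ℤ) ≠ 0 := by exact_mod_cast hp.ne_zero
    have h1 : (((n % (p : ℤ)).toNat : ℤ)) = n % (p : ℤ) :=
      Int.toNat_of_nonneg (Int.emod_nonneg n hpz)
    conv_lhs => rw [← Int.mul_ediv_add_emod n (p : ℤ)]
    rw [zpow_add, zpow_mul, zpow_natCast, hφp, one_zpow, one_mul]
    conv_lhs => rw [← h1]
    rw [zpow_natCast]
  -- every point is a power of φ applied to its orbit representative
  have fact5 : ∀ y : Y, ∃ k : ℕ, (φ ^ k) ((Quotient.mk s y).out) = y := by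
    intro y
    have hout : Quotient.mk s ((Quotient.mk s y).out) = Quotient.mk s y :=
      Quotient.out_eq _
    have hrel : (Quotient.mk s y).out ∈ MulAction.orbit (Subgroup.zpowers φ) y :=
      MulAction.orbitRel_apply.mp (Quotient.exact hout)
    obtain ⟨g, hg⟩ := MulAction.mem_orbit_iff.mp hrel
    obtain ⟨n, hn⟩ := Subgroup.mem_zpowers_iff.mp g.2
    have hgy : (φ ^ n) y = (Quotient.mk s y).out := by
      rw [hn]; exact hg
    refine ⟨((-n) % (p : ℤ)).toNat, ?_⟩
    rw [← hzp (-n), ← hgy, zpow_neg, Equiv.Perm.inv_def, Equiv.symm_apply_apply]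
  -- the eigenspace of A for eigenvalue ζ
  set E : Submodule K (Y → K) := LinearMap.ker (A - ζ • 1) with hE
  have memE : ∀ f : Y → K, f ∈ E ↔ A f = ζ • f := by
    intro f
    rw [hE, LinearMap.mem_ker, LinearMap.sub_apply, LinearMap.smul_apply,
      Module.End.one_apply, sub_eq_zero]
  have memE' : ∀ f : Y → K, f ∈ E ↔ ∀ y, f y = ζ * f (φ y) := by
    intro f
    rw [memE]
    constructor
    · intro h y
      have h2 := congrFun h (φ y)
      rw [hA] at h2
      simpa using h2
    · intro h
      funext y
      have h2 : A f (φ (φ.symm y)) = (ζ • f) (φ (φ.symm y)) := by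
        rw [hA]
        simpa using h (φ.symm y)
      simpa [Equiv.apply_symm_apply] using h2
  -- decay along orbits for eigenvectors
  have decay : ∀ f : Y → K, f ∈ E → ∀ (r : Y) (k : ℕ),
      f ((φ ^ k) r) = (ζ⁻¹) ^ k * f r := by
    intro f hf r k
    induction k with
    | zero => simp
    | succ n ih =>
      have h1 : f (φ ((φ ^ n) r)) = ζ⁻¹ * f ((φ ^ n) r) := by
        have h2 := (memE' f).mp hf ((φ ^ n) r)
        rw [h2, inv_mul_cancel_left₀ hζ0]
      rw [pow_succ', Equiv.Perm.mul_apply, h1, ih, pow_succ']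
      ring
  -- the "discrete log" of each point
  set ky : Y → ℕ := fun y => (fact5 y).choose with hkydef
  have hky : ∀ y : Y, (φ ^ ky y) ((Quotient.mk s y).out) = y := fun y => (fact5 y).choose_spec
  have hmkφ : ∀ y : Y, Quotient.mk s (φ y) = Quotient.mk s y := by
    intro y
    refine Quotient.sound (MulAction.orbitRel_apply.mpr ?_)
    exact ⟨⟨φ, Subgroup.mem_zpowers φ⟩, rfl⟩
  have kcong : ∀ y : Y, (ζ⁻¹) ^ (ky (φ y)) = (ζ⁻¹) ^ (ky y) * ζ⁻¹ := by
    intro y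
    have e1 : (φ ^ ky (φ y)) ((Quotient.mk s y).out) = φ y := by
      have := hky (φ y)
      rwa [hmkφ y] at this
    have e2 : (φ ^ (ky y + 1)) ((Quotient.mk s y).out) = φ y := by
      rw [pow_succ', Equiv.Perm.mul_apply, hky y]
    have e3 : ζ ^ (ky (φ y)) = ζ ^ (ky y + 1) := fact3 _ _ _ (e1.trans e2.symm)
    rw [inv_pow, e3, ← inv_pow, pow_succ]
  -- candidate eigenvectors built from functions on the orbit space
  have hmem : ∀ g : Q → K,
      (fun y => (ζ⁻¹) ^ ky y * g (Quotient.mk s y)) ∈ E := by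
    intro g
    refine (memE' _).mpr fun y => ?_
    rw [hmkφ y, kcong y]
    field_simp
  -- the linear map from the eigenspace to functions on orbits
  set toQ : E →ₗ[K] (Q → K) :=
    { toFun := fun f q => (f : Y → K) q.out
      map_add' := fun f g => by funext q; simp
      map_smul' := fun c f => by funext q; simp } with htoQ
  have hinj : Function.Injective toQ := by
    intro f g h
    apply Subtype.ext
    funext y
    have h1 : (f : Y → K) y = (ζ⁻¹) ^ ky y * (f : Y → K) ((Quotient.mk s y).out) := by
      conv_lhs => rw [← hky y]
      exact decay _ f.2 _ _
    have h2 : (g : Y → K) y = (ζ⁻¹) ^ ky y * (g : Y → K) ((Quotient.mk s y).out) := by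
      conv_lhs => rw [← hky y]
      exact decay _ g.2 _ _
    have h3 := congrFun h (Quotient.mk s y)
    simp only [htoQ, LinearMap.coe_mk, AddHom.coe_mk] at h3
    rw [h1, h2, h3]
  have hsurj : Function.Surjective toQ := by
    intro g
    refine ⟨⟨fun y => (ζ⁻¹) ^ ky y * g (Quotient.mk s y), hmem g⟩, ?_⟩
    funext q
    simp only [htoQ, LinearMap.coe_mk, AddHom.coe_mk]
    have hrep : Quotient.mk s q.out = q := Quotient.out_eq q
    have hfixk : (φ ^ ky q.out) q.out = q.out := by
      have := hky q.out
      rwa [hrep] at this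
    have hd : p ∣ ky q.out := fact2 _ _ hfixk
    have : (ζ⁻¹) ^ ky q.out = 1 := by rw [inv_pow, zeta1 _ hd, inv_one]
    rw [this, one_mul, hrep]
  have eqv : E ≃ₗ[K] (Q → K) := LinearEquiv.ofBijective toQ ⟨hinj, hsurj⟩
  haveI : Fintype Q := Quotient.fintype s
  have hfr : Module.finrank K E = Nat.card Q := by
    rw [LinearEquiv.finrank_eq eqv, Module.finrank_pi, Nat.card_eq_fintype_card]
  -- B commutes with A hence preserves E
  have hc : A * B = B * A := by rw [← hB, ← pow_succ, ← pow_succ']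
  have hBE : ∀ x ∈ E, B x ∈ E := by
    intro x hx
    rw [memE] at hx ⊢
    rw [← Module.End.mul_apply, hc, Module.End.mul_apply, hx, map_smul]
  set Br : E →ₗ[K] E := LinearMap.restrict B hBE with hBr
  have hpowr : ∀ (n : ℕ) (x : E), (((Br ^ n) x : E) : Y → K) = (B ^ n) (x : Y → K) := by
    intro n
    induction n with
    | zero => intro x; simp
    | succ m ih =>
      intro x
      rw [pow_succ, Module.End.mul_apply, ih, pow_succ, Module.End.mul_apply, hBr,
        LinearMap.restrict_coe_apply]
  have hBrp : Br ^ p = ζ • (1 : Module.End K E) := by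
    apply LinearMap.ext
    intro x
    apply Subtype.ext
    show (((Br ^ p) x : E) : Y → K) = _
    rw [hpowr p x, hB, (memE _).mp x.2]
    simp
  have hdet : (LinearMap.det Br) ^ p = ζ ^ Module.finrank K E := by
    rw [← map_pow, hBrp, LinearMap.det_smul]
    simp
  by_contra hnd
  refine hK (Nat.card Q) (fun h => hnd (by exact_mod_cast h)) ⟨LinearMap.det Br, ?_⟩
  rw [zpow_natCast, ← hfr]
  exact hdet
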